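/- Let ε = 1 or ε = -1, let a, b, c : ℝ × ℝ → ℝ be smooth, let ξ : ℝ → ℝ be smooth with ξ(t) ≠ 0 for all t, and let F : ℝ × ℝ → ℝ be a smooth function of (y,t) satisfying ε ∂y² F + a(y,t) ∂y F + ξ''(t)/ξ(t) = 0 for all (y,t). Then the function u(x,y,t) := (ξ'(t)/ξ(t)) x + F(y,t) satisfies the CGB equation with f ≡ 0: ∂x(∂t u + u ∂x u + ∂x² u) + ε ∂y² u + a(y,t) ∂y u + b(y,t) ∂x ∂y u + c(y,t) ∂x² u = 0 for all (x,y,t). -/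

import Mathlib

/-- Partial derivative in the first (`x`) variable. -/
noncomputable def pdx (u : ℝ → ℝ → ℝ → ℝ) : ℝ → ℝ → ℝ → ℝ :=
  fun x y t => deriv (fun s => u s y t) x

/-- Partial derivative in the second (`y`) variable. -/
noncomputable def pdy (u : ℝ → ℝ → ℝ → ℝ) : ℝ → ℝ → ℝ → ℝ :=
  fun x y t => deriv (fun s => u x s t) y

/-- Partial derivative in the third (`t`) variable. -/
noncomputable def pdt (u : ℝ → ℝ → ℝ → ℝ) : ℝ → ℝ → ℝ → ℝ :=
  fun x y t => deriv (fun s => u x y s) t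

/-- Partial derivative of a function of two variables in its first variable. -/
noncomputable def pfst (F : ℝ → ℝ → ℝ) : ℝ → ℝ → ℝ :=
  fun z t => deriv (fun s => F s t) z

theorem stmt6 (ε : ℝ) (hε : ε = 1 ∨ ε = -1)
    (a b c : ℝ × ℝ → ℝ)
    (ha : ContDiff ℝ (⊤ : ℕ∞) a) (hb : ContDiff ℝ (⊤ : ℕ∞) b)
    (hc : ContDiff ℝ (⊤ : ℕ∞) c)
    (ξ : ℝ → ℝ) (hξ : ContDiff ℝ (⊤ : ℕ∞) ξ) (hξ0 : ∀ t, ξ t ≠ 0)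
    (F : ℝ → ℝ → ℝ)
    (hF : ContDiff ℝ (⊤ : ℕ∞) (fun p : ℝ × ℝ => F p.1 p.2))
    (hFeq : ∀ y t : ℝ,
      ε * pfst (pfst F) y t + a (y, t) * pfst F y t + deriv (deriv ξ) t / ξ t = 0)
    (u : ℝ → ℝ → ℝ → ℝ)
    (hudef : ∀ x y t, u x y t = deriv ξ t / ξ t * x + F y t) :
    ∀ x y t : ℝ,
      pdx (fun x y t => pdt u x y t + u x y t * pdx u x y t + pdx (pdx u) x y t) x y t
        + ε * pdy (pdy u) x y t + a (y, t) * pdy u x y t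
        + b (y, t) * pdx (pdy u) x y t + c (y, t) * pdx (pdx u) x y t = 0 := by
  intro x y t
  set g : ℝ → ℝ := fun t => deriv ξ t / ξ t with hg_def
  have hξ' : ContDiff ℝ (⊤ : ℕ∞) (deriv ξ) := (contDiff_infty_iff_deriv.mp hξ).2
  have hg : ContDiff ℝ (⊤ : ℕ∞) g := hξ'.div hξ hξ0
  have hgd : Differentiable ℝ g := hg.differentiable (by simp)
  have hFt : ∀ y', Differentiable ℝ (fun s => F y' s) := fun y' =>
    (hF.comp (contDiff_const.prodMk contDiff_id)).differentiable (by simp)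
  -- pdx u = g t
  have hpdx : ∀ x' y' t', pdx u x' y' t' = g t' := by
    intro x' y' t'
    unfold pdx
    have h1 : (fun s => u s y' t') = fun s => g t' * s + F y' t' :=
      funext fun s => hudef s y' t'
    rw [h1]
    have h := ((hasDerivAt_id x').const_mul (g t')).add_const (F y' t')
    simpa using h.deriv
  -- pdy u = pfst F
  have hpdy : ∀ x' y' t', pdy u x' y' t' = pfst F y' t' := by
    intro x' y' t'
    unfold pdy
    have h1 : (fun s => u x' s t') = fun s => g t' * x' + F s t' :=
      funext fun s => hudef x' s t'
    rw [h1, pfst]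
    exact deriv_const_add _
  -- pdt u
  have hpdt : ∀ x' y' t',
      pdt u x' y' t' = deriv g t' * x' + deriv (fun s => F y' s) t' := by
    intro x' y' t'
    unfold pdt
    have h1 : (fun s => u x' y' s) = fun s => g s * x' + F y' s :=
      funext fun s => hudef x' y' s
    rw [h1]
    have h := (((hgd t').hasDerivAt).mul_const x').add ((hFt y' t').hasDerivAt)
    exact h.deriv
  -- pdx (pdx u) = 0
  have hpdxx : ∀ x' y' t', pdx (pdx u) x' y' t' = 0 := by
    intro x' y' t'
    show deriv (fun s => pdx u s y' t') x' = 0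
    have h1 : (fun s => pdx u s y' t') = fun _ => g t' :=
      funext fun s => hpdx s y' t'
    rw [h1, deriv_const]
  -- pdx (pdy u) = 0
  have hpdxy : pdx (pdy u) x y t = 0 := by
    show deriv (fun s => pdy u s y t) x = 0
    have h1 : (fun s => pdy u s y t) = fun _ => pfst F y t :=
      funext fun s => hpdy s y t
    rw [h1, deriv_const]
  -- pdy (pdy u) = pfst (pfst F)
  have hpdyy : pdy (pdy u) x y t = pfst (pfst F) y t := by
    show deriv (fun s => pdy u x s t) y = pfst (pfst F) y t
    have h1 : (fun s => pdy u x s t) = fun s => pfst F s t :=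
      funext fun s => hpdy x s t
    rw [h1]; rfl
  -- the inner x-derivative
  have hinner : pdx (fun x y t => pdt u x y t + u x y t * pdx u x y t
      + pdx (pdx u) x y t) x y t = deriv g t + g t * g t := by
    show deriv (fun s => pdt u s y t + u s y t * pdx u s y t + pdx (pdx u) s y t) x
      = deriv g t + g t * g t
    have h1 : (fun s => pdt u s y t + u s y t * pdx u s y t + pdx (pdx u) s y t)
        = fun s => (deriv g t * s + deriv (fun s => F y s) t)
            + (g t * s + F y t) * g t + 0 := by
      funext s
      rw [hpdt s y t, hudef s y t, hpdx s y t, hpdxx s y t]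
    rw [h1]
    have hA : HasDerivAt (fun s => deriv g t * s + deriv (fun s => F y s) t)
        (deriv g t) x := by
      simpa using ((hasDerivAt_id x).const_mul (deriv g t)).add_const
        (deriv (fun s => F y s) t)
    have hB : HasDerivAt (fun s => (g t * s + F y t) * g t) (g t * g t) x := by
      have := (((hasDerivAt_id x).const_mul (g t)).add_const (F y t)).mul_const (g t)
      simpa using this
    have h := (hA.add hB).add_const (0 : ℝ)
    exact h.deriv
  -- g' + g^2 = ξ''/ξ
  have hkey : deriv g t + g t * g t = deriv (deriv ξ) t / ξ t := by
    have hd : deriv g t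
        = (deriv (deriv ξ) t * ξ t - deriv ξ t * deriv ξ t) / (ξ t) ^ 2 := by
      rw [hg_def]
      exact deriv_div (hξ'.differentiable (by simp) t) (hξ.differentiable (by simp) t)
        (hξ0 t)
    rw [hd, hg_def]
    rw [div_mul_div_comm, ← sq (ξ t), ← add_div, sub_add_cancel, sq (ξ t),
      mul_div_mul_right _ _ (hξ0 t)]
  rw [hinner, hpdyy, hpdy, hpdxy, hpdxx, hkey]
  have := hFeq y t
  linarith
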